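/- In dimension N = 3, the constant a₂ = sup_{0<r<1} w₁(r)/w₀(r) equals 1/(12π), where w₀(r) = (1/(4π))(1/r − 1) and w₁(r) = (1/(48π²))[3(r−1) − 3 ln r − (r²−1)/2]. In particular a₂ < 1/4. -/

import Mathlib

open Real Set

lemma contF : ContinuousOn (fun r : ℝ => 9/2 - 6*r + 3/2*r^2 + 3*Real.log r) (Set.Ioc 0 1) := by
  apply ContinuousOn.add (by fun_prop)
  exact (Real.continuousOn_log.mono (by intro x hx; simpa using ne_of_gt hx.1)).const_smul (3:ℝ)

lemma psi_neg : ∀ r ∈ Set.Ioo (0:ℝ) 1, 9/2 - 6*r + 3/2*r^2 + 3*Real.log r < 0 := by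
  have hmono : StrictMonoOn (fun r : ℝ => 9/2 - 6*r + 3/2*r^2 + 3*Real.log r) (Set.Ioc 0 1) := by
    apply strictMonoOn_of_deriv_pos (convex_Ioc 0 1) contF
    intro x hx
    rw [interior_Ioc] at hx
    have hx0 : x ≠ 0 := ne_of_gt hx.1
    have hd : HasDerivAt (fun r : ℝ => 9/2 - 6*r + 3/2*r^2 + 3*Real.log r)
        (-6 + 3*x + 3*x⁻¹) x := by
      have h1 : HasDerivAt (fun r : ℝ => 9/2 - 6*r + 3/2*r^2) (-6 + 3*x) x := by
        have := ((hasDerivAt_const x (9/2:ℝ)).sub ((hasDerivAt_id x).const_mul (6:ℝ))).add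
          (((hasDerivAt_pow 2 x)).const_mul (3/2:ℝ))
        exact this.congr_deriv (by ring)
      have h2 := (Real.hasDerivAt_log hx0).const_mul (3:ℝ)
      exact h1.add h2
    rw [hd.deriv]
    have hne : x - 1 ≠ 0 := sub_ne_zero.mpr (ne_of_lt hx.2)
    have h3 : -6 + 3*x + 3*x⁻¹ = 3*(x-1)^2 / x := by field_simp; ring_nf; try tauto
    rw [h3]
    exact div_pos (by nlinarith [sq_nonneg (x-1), pow_two_pos_of_ne_zero hne]) hx.1
  intro r hr
  have := hmono ⟨hr.1, le_of_lt hr.2⟩ (by norm_num) hr.2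
  simp only [Real.log_one] at this
  linarith

lemma phi_pos : ∀ r ∈ Set.Ioo (0:ℝ) 1,
    0 < 1 + 3/2*r - 3*r^2 + 1/2*r^3 + 3*(r*Real.log r) := by
  have hanti : StrictAntiOn (fun r : ℝ => 1 + 3/2*r - 3*r^2 + 1/2*r^3 + 3*(r*Real.log r))
      (Set.Ioc 0 1) := by
    apply strictAntiOn_of_deriv_neg (convex_Ioc 0 1)
    · apply ContinuousOn.add (by fun_prop)
      apply ContinuousOn.const_smul ?_ (3:ℝ)
      exact continuousOn_id.mul
        (Real.continuousOn_log.mono (by intro x hx; simpa using ne_of_gt hx.1))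
    · intro x hx
      rw [interior_Ioc] at hx
      have hx0 : x ≠ 0 := ne_of_gt hx.1
      have hd : HasDerivAt (fun r : ℝ => 1 + 3/2*r - 3*r^2 + 1/2*r^3 + 3*(r*Real.log r))
          (9/2 - 6*x + 3/2*x^2 + 3*Real.log x) x := by
        have h1 : HasDerivAt (fun r : ℝ => 1 + 3/2*r - 3*r^2 + 1/2*r^3)
            (3/2 - 6*x + 3/2*x^2) x := by
          have := (((hasDerivAt_const x (1:ℝ)).add ((hasDerivAt_id x).const_mul (3/2:ℝ))).sub
            ((hasDerivAt_pow 2 x).const_mul (3:ℝ))).add ((hasDerivAt_pow 3 x).const_mul (1/2:ℝ))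
          exact this.congr_deriv (by ring)
        have h2 : HasDerivAt (fun r : ℝ => r * Real.log r) (Real.log x + 1) x := by
          have := (hasDerivAt_id x).mul (Real.hasDerivAt_log hx0)
          exact this.congr_deriv (by simp [hx0])
        have := h1.add (h2.const_mul (3:ℝ))
        exact this.congr_deriv (by ring)
      rw [hd.deriv]
      exact psi_neg x hx
  intro r hr
  have := hanti ⟨hr.1, le_of_lt hr.2⟩ (by norm_num) hr.2
  simp only [Real.log_one, mul_zero, mul_one] at this
  linarith

theorem stmt5 (w0 w1 : ℝ → ℝ)
    (hw0 : ∀ r : ℝ, w0 r = (1 / (4 * Real.pi)) * (1 / r - 1))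
    (hw1 : ∀ r : ℝ, w1 r =
      (1 / (48 * Real.pi ^ 2)) * (3 * (r - 1) - 3 * Real.log r - (r ^ 2 - 1) / 2)) :
    sSup ((fun r => w1 r / w0 r) '' Set.Ioo (0:ℝ) 1) = 1 / (12 * Real.pi) ∧
    1 / (12 * Real.pi) < 1 / 4 := by
  have hπ := Real.pi_pos
  have hπ3 := Real.pi_gt_three
  have hw0pos : ∀ r ∈ Set.Ioo (0:ℝ) 1, 0 < w0 r := by
    intro r hr
    rw [hw0]
    have h1 : 1 < 1/r := by rw [lt_div_iff₀ hr.1]; linarith [hr.2]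
    have : (0:ℝ) < 1/(4*Real.pi) := by positivity
    nlinarith
  have key : ∀ r ∈ Set.Ioo (0:ℝ) 1, w1 r / w0 r ≤ 1/(12*Real.pi) := by
    intro r hr
    have hr0 := hr.1
    have hφ := phi_pos r hr
    rw [div_le_iff₀ (hw0pos r hr), hw0, hw1]
    have h : 1/(12*Real.pi) * ((1/(4*Real.pi))*(1/r-1)) = (1/(48*Real.pi^2)) * ((1-r)/r) := by
      field_simp; ring_nf; try tauto
    rw [h]
    apply mul_le_mul_of_nonneg_left _ (by positivity)
    rw [le_div_iff₀ hr0]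
    nlinarith [hφ]
  have key2 : ∀ r ∈ Set.Ioo (0:ℝ) 1, 1/(12*Real.pi) - (1-r) ≤ w1 r / w0 r := by
    intro r hr
    have hr0 := hr.1
    have hr1 := hr.2
    have hlog := Real.log_le_sub_one_of_pos hr0
    rw [le_div_iff₀ (hw0pos r hr), hw0, hw1]
    have h : (1/(12*Real.pi) - (1-r)) * ((1/(4*Real.pi))*(1/r-1))
        = (1/(48*Real.pi^2 * r)) * ((1 - 12*Real.pi*(1-r)) * (1-r)) := by
      field_simp; ring_nf; try tauto
    have h2 : (1/(48*Real.pi^2)) * (3*(r-1) - 3*Real.log r - (r^2-1)/2)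
        = (1/(48*Real.pi^2 * r)) * (r * (3*(r-1) - 3*Real.log r - (r^2-1)/2)) := by
      field_simp
    rw [h, h2]
    apply mul_le_mul_of_nonneg_left _ (by positivity)
    nlinarith [mul_nonneg hr0.le (sub_nonneg.mpr hlog),
      mul_nonneg (by linarith : (0:ℝ) ≤ Real.pi - 3) (sq_nonneg (1-r)),
      mul_nonneg (sq_nonneg (1-r)) (by linarith : (0:ℝ) ≤ 1-r)]
  constructor
  · have hbdd : BddAbove ((fun r => w1 r / w0 r) '' Set.Ioo (0:ℝ) 1) := by
      refine ⟨1/(12*Real.pi), ?_⟩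
      rintro x ⟨r, hr, rfl⟩
      exact key r hr
    apply le_antisymm
    · apply Real.sSup_le
      · rintro x ⟨r, hr, rfl⟩
        exact key r hr
      · positivity
    · apply le_of_forall_sub_le
      intro ε hε
      set r : ℝ := max (1/2) (1-ε) with hrdef
      have hrmem : r ∈ Set.Ioo (0:ℝ) 1 := by
        constructor
        · have : (1/2:ℝ) ≤ r := le_max_left _ _
          linarith
        · apply max_lt (by norm_num) (by linarith)
      have h1r : 1 - r ≤ ε := by
        have : 1 - ε ≤ r := le_max_right _ _
        linarith
      calc 1/(12*Real.pi) - ε ≤ 1/(12*Real.pi) - (1-r) := by linarith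
        _ ≤ w1 r / w0 r := key2 r hrmem
        _ ≤ sSup ((fun r => w1 r / w0 r) '' Set.Ioo (0:ℝ) 1) :=
            le_csSup hbdd ⟨r, hrmem, rfl⟩
  · rw [div_lt_div_iff₀ (by positivity) (by norm_num)]
    nlinarith
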